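/- Let S denote the set of symmetric ℕ×ℕ matrices over k; S is stable under the congruence action of GL. Let X ⊆ S be stable under GL and closed in S, i.e., X is the intersection with S of a Zariski-closed subset of the space of ℕ×ℕ matrices. Then exactly one of the following holds: X = ∅, or X = S, or there exists r ∈ ℕ such that X = {A ∈ S : rank of A is at most r}, i.e., X consists of the symmetric matrices all of whose (r+1)×(r+1) submatrices are singular. -/

import Mathlib

noncomputable section

/-- `g : ℕ → ℕ → k` is a finitary invertible `ℕ×ℕ` matrix. -/
def IsFinGL {k : Type*} [Field k] (g : ℕ → ℕ → k) : Prop :=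
  ∃ N : ℕ, (∀ i j : ℕ, N ≤ i ∨ N ≤ j → g i j = if i = j then 1 else 0) ∧
    IsUnit (Matrix.of fun i j : Fin N => g i.1 j.1)

/-- A permutation of `ℕ` with finite support. -/
def IsFinPerm (σ : Equiv.Perm ℕ) : Prop := ∃ N : ℕ, ∀ i : ℕ, N ≤ i → σ i = i

/-- The action of `Sym` on `ℕ×ℕ` matrices by permuting rows. -/
def rowPerm {k : Type*} [Field k] (σ : Equiv.Perm ℕ) (A : ℕ → ℕ → k) : ℕ → ℕ → k :=
  fun i j => A (σ⁻¹ i) j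

/-- The action of `GL` on `ℕ×ℕ` matrices by right multiplication on columns:
`(A • g) i j = Σ_t A i t * g t j`, a finite sum since `g` is finitary. -/
def colMul {k : Type*} [Field k] (A : ℕ → ℕ → k) (g : ℕ → ℕ → k) : ℕ → ℕ → k :=
  fun i j => ∑ᶠ t : ℕ, A i t * g t j

/-- A subset of the space of `ℕ×ℕ` matrices is Zariski closed if it is the
common zero locus of a set of polynomials in the entries. -/
def IsZClosedMat {k : Type*} [Field k] (X : Set (ℕ → ℕ → k)) : Prop :=
  ∃ S : Set (MvPolynomial (ℕ × ℕ) k),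
    X = {A | ∀ f ∈ S, MvPolynomial.eval (fun p : ℕ × ℕ => A p.1 p.2) f = 0}

/-- The congruence action of `GL` on `ℕ×ℕ` matrices:
`(g • A) i j = Σ_{s,t} g i s * g j t * A s t` (finite sums). -/
def congAct {k : Type*} [Field k] (g : ℕ → ℕ → k) (A : ℕ → ℕ → k) : ℕ → ℕ → k :=
  fun i j => ∑ᶠ s : ℕ, ∑ᶠ t : ℕ, g i s * g j t * A s t

/-- The set of symmetric `ℕ×ℕ` matrices. -/
def SymMats (k : Type*) [Field k] : Set (ℕ → ℕ → k) := {A | ∀ i j : ℕ, A i j = A j i}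

/-- The set of symmetric `ℕ×ℕ` matrices of rank at most `r`: all
`(r+1)×(r+1)` submatrices are singular. -/
def SymRankLe (k : Type*) [Field k] (r : ℕ) : Set (ℕ → ℕ → k) :=
  {A | A ∈ SymMats k ∧ ∀ rr cc : Fin (r + 1) → ℕ,
    Function.Injective rr → Function.Injective cc →
      (Matrix.of fun i j : Fin (r + 1) => A (rr i) (cc j)).det = 0}

namespace Aux

open Matrix

variable {k : Type*} [Field k]

/-- embed an `N×N` matrix as a finitary `ℕ×ℕ` matrix (identity outside). -/
def embed (N : ℕ) (Q : Matrix (Fin N) (Fin N) k) : ℕ → ℕ → k :=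
  fun i j => if h : i < N ∧ j < N then Q ⟨i, h.1⟩ ⟨j, h.2⟩ else if i = j then 1 else 0

lemma embed_apply_of_lt (N : ℕ) (Q : Matrix (Fin N) (Fin N) k) (i j : ℕ)
    (hi : i < N) (hj : j < N) : embed N Q i j = Q ⟨i, hi⟩ ⟨j, hj⟩ := by
  simp [embed, hi, hj]

lemma embed_eq_zero (N : ℕ) (Q : Matrix (Fin N) (Fin N) k) (i j : ℕ)
    (hi : i < N) (hj : N ≤ j) : embed N Q i j = 0 := by
  have : ¬ (i < N ∧ j < N) := by omega
  have hij : i ≠ j := by omega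
  simp [embed, this, hij]

lemma embed_isFinGL (N : ℕ) (Q : Matrix (Fin N) (Fin N) k) (hQ : IsUnit Q) :
    IsFinGL (embed N Q) := by
  refine ⟨N, fun i j h => ?_, ?_⟩
  · have : ¬ (i < N ∧ j < N) := by omega
    simp [embed, this]
  · have : (Matrix.of fun i j : Fin N => embed N Q i.1 j.1) = Q := by
      ext i j
      simp [Matrix.of_apply, embed_apply_of_lt N Q i.1 j.1 i.2 j.2]
    rwa [this]

/-- corner of size `N` of an `ℕ×ℕ` matrix -/
def corner (N : ℕ) (A : ℕ → ℕ → k) : Matrix (Fin N) (Fin N) k :=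
  Matrix.of fun i j => A i.1 j.1

lemma congAct_embed_corner (N : ℕ) (Q : Matrix (Fin N) (Fin N) k) (A : ℕ → ℕ → k)
    (i j : ℕ) (hi : i < N) (hj : j < N) :
    congAct (embed N Q) A i j = (Q * corner N A * Qᵀ) ⟨i, hi⟩ ⟨j, hj⟩ := by
  have hinner : ∀ s : ℕ, (∑ᶠ t : ℕ, embed N Q i s * embed N Q j t * A s t)
      = ∑ t ∈ Finset.range N, embed N Q i s * embed N Q j t * A s t := by
    intro s
    apply finsum_eq_finset_sum_of_support_subset
    intro t ht
    simp only [Function.mem_support] at ht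
    by_contra hc
    simp only [Finset.coe_range, Set.mem_Iio, not_lt] at hc
    rw [embed_eq_zero N Q j t hj hc] at ht
    simp at ht
  have houter : (∑ᶠ s : ℕ, ∑ᶠ t : ℕ, embed N Q i s * embed N Q j t * A s t)
      = ∑ s ∈ Finset.range N, ∑ᶠ t : ℕ, embed N Q i s * embed N Q j t * A s t := by
    apply finsum_eq_finset_sum_of_support_subset
    intro s hs
    simp only [Function.mem_support] at hs
    by_contra hc
    simp only [Finset.coe_range, Set.mem_Iio, not_lt] at hc
    apply hs
    rw [hinner s]
    apply Finset.sum_eq_zero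
    intro t _
    rw [embed_eq_zero N Q i s hi hc]
    ring
  rw [congAct, houter]
  calc ∑ s ∈ Finset.range N, ∑ᶠ t : ℕ, embed N Q i s * embed N Q j t * A s t
      = ∑ s ∈ Finset.range N, ∑ t ∈ Finset.range N,
          embed N Q i s * embed N Q j t * A s t := by
        exact Finset.sum_congr rfl fun s _ => hinner s
    _ = ∑ s : Fin N, ∑ t : Fin N, Q ⟨i, hi⟩ s * Q ⟨j, hj⟩ t * A s.1 t.1 := by
        rw [← Fin.sum_univ_eq_sum_range]
        apply Finset.sum_congr rfl
        intro s _
        rw [← Fin.sum_univ_eq_sum_range]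
        apply Finset.sum_congr rfl
        intro t _
        rw [embed_apply_of_lt N Q i s.1 hi s.2, embed_apply_of_lt N Q j t.1 hj t.2]
    _ = (Q * corner N A * Qᵀ) ⟨i, hi⟩ ⟨j, hj⟩ := by
        rw [Matrix.mul_apply]
        rw [Finset.sum_comm]
        apply Finset.sum_congr rfl
        intro t _
        rw [Matrix.mul_apply, Finset.sum_mul]
        apply Finset.sum_congr rfl
        intro s _
        simp [corner, Matrix.transpose_apply]
        ring

variable {k : Type*} [Field k]

def IsZClosedMat' (X : Set (ℕ → ℕ → k)) : Prop :=
  ∃ S : Set (MvPolynomial (ℕ × ℕ) k),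
    X = {A | ∀ f ∈ S, MvPolynomial.eval (fun p : ℕ × ℕ => A p.1 p.2) f = 0}

lemma eval_congr_on_vars (f : MvPolynomial (ℕ × ℕ) k) (x y : ℕ × ℕ → k)
    (h : ∀ p ∈ f.vars, x p = y p) :
    MvPolynomial.eval x f = MvPolynomial.eval y f := by
  rw [MvPolynomial.eval_eq, MvPolynomial.eval_eq]
  apply Finset.sum_congr rfl
  intro d hd
  congr 1
  apply Finset.prod_congr rfl
  intro p hp
  rw [h p (MvPolynomial.mem_vars p |>.2 ⟨d, hd, hp⟩)]

/-- If `B` is symmetric and every corner of `B` is an `ε → 0` limit of corners of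
elements of `X` (affinely in `ε`), then `B ∈ X`. -/
lemma mem_of_corner_limit [CharZero k] {X : Set (ℕ → ℕ → k)}
    (hcl : ∃ C : Set (ℕ → ℕ → k), IsZClosedMat' C ∧ X = {A | ∀ i j : ℕ, A i j = A j i} ∩ C)
    (B : ℕ → ℕ → k) (hB : ∀ i j : ℕ, B i j = B j i)
    (h : ∀ N : ℕ, ∃ D : ℕ → ℕ → k, ∀ ε : k, ε ≠ 0 →
      ∃ A ∈ X, ∀ i j : ℕ, i < N → j < N → A i j = B i j + ε * D i j) :
    B ∈ X := by
  obtain ⟨C, ⟨S, hCS⟩, hXC⟩ := hcl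
  rw [hXC]
  refine ⟨hB, ?_⟩
  rw [hCS]
  intro f hf
  set N : ℕ := (f.vars.sup fun p => max p.1 p.2) + 1 with hN
  have hvars : ∀ p ∈ f.vars, p.1 < N ∧ p.2 < N := by
    intro p hp
    have h1 : max p.1 p.2 ≤ f.vars.sup fun p => max p.1 p.2 :=
      Finset.le_sup (f := fun p : ℕ × ℕ => max p.1 p.2) hp
    omega
  obtain ⟨D, hD⟩ := h N
  set φ : Polynomial k :=
    MvPolynomial.aeval (fun p : ℕ × ℕ => Polynomial.C (B p.1 p.2)
      + Polynomial.C (D p.1 p.2) * Polynomial.X) f with hφ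
  have hev : ∀ ε : k, Polynomial.eval ε φ =
      MvPolynomial.eval (fun p : ℕ × ℕ => B p.1 p.2 + D p.1 p.2 * ε) f := by
    intro ε
    have := congrFun (congrArg DFunLike.coe (MvPolynomial.comp_aeval
      (fun p : ℕ × ℕ => Polynomial.C (B p.1 p.2) + Polynomial.C (D p.1 p.2) * Polynomial.X)
      (Polynomial.aeval ε : Polynomial k →ₐ[k] k))) f
    simp only [AlgHom.coe_comp, Function.comp_apply] at this
    have h3 : (fun i : ℕ × ℕ => (Polynomial.aeval ε)
        (Polynomial.C (B i.1 i.2) + Polynomial.C (D i.1 i.2) * Polynomial.X)) =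
        fun p : ℕ × ℕ => B p.1 p.2 + D p.1 p.2 * ε := by
      funext p
      simp
    have h2 : (Polynomial.aeval ε : Polynomial k →ₐ[k] k) φ =
        MvPolynomial.aeval (fun p : ℕ × ℕ => B p.1 p.2 + D p.1 p.2 * ε) f := by
      rw [hφ, this, h3]
    rw [hφ] at h2 ⊢
    rw [← Polynomial.coe_aeval_eq_eval, h2,
      ← MvPolynomial.coe_aeval_eq_eval]
    rfl
  have hroot : ∀ ε : k, ε ≠ 0 → Polynomial.eval ε φ = 0 := by
    intro ε hε
    obtain ⟨A, hAX, hA⟩ := hD ε hε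
    have hAC : ∀ g ∈ S, MvPolynomial.eval (fun p : ℕ × ℕ => A p.1 p.2) g = 0 := by
      have := hXC ▸ hAX
      rw [hCS] at this
      exact this.2
    rw [hev ε]
    rw [← hAC f hf]
    apply eval_congr_on_vars
    intro p hp
    obtain ⟨h1, h2⟩ := hvars p hp
    rw [hA p.1 p.2 h1 h2]; ring
  have hφ0 : φ = 0 := by
    apply Polynomial.eq_zero_of_infinite_isRoot
    apply Set.Infinite.mono (s := {x : k | x ≠ 0})
    · intro x hx
      exact hroot x hx
    · have : ({0}ᶜ : Set k).Infinite := Set.Finite.infinite_compl (Set.finite_singleton 0)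
      exact this
  have := hev 0
  rw [hφ0] at this
  simp only [Polynomial.eval_zero] at this
  rw [eval_congr_on_vars f (fun p => B p.1 p.2)
    (fun p : ℕ × ℕ => B p.1 p.2 + D p.1 p.2 * 0) (by intro p _; ring)]
  exact this.symm
section RankLemmas

variable {k : Type*} [Field k]

lemma submatrix_eq_mul_mul {N t u : ℕ} (A : Matrix (Fin N) (Fin N) k)
    (f : Fin t → Fin N) (g : Fin u → Fin N) :
    A.submatrix f g =
      ((1 : Matrix (Fin N) (Fin N) k).submatrix f id) * A *
        ((1 : Matrix (Fin N) (Fin N) k).submatrix id g) := by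
  ext i j
  rw [Matrix.mul_apply]
  have : ∀ x : Fin N, ((1 : Matrix (Fin N) (Fin N) k).submatrix f id * A) i x
      = A (f i) x := by
    intro x
    rw [Matrix.mul_apply]
    simp [Matrix.one_apply, Finset.sum_ite_eq]
  simp only [this]
  simp [Matrix.submatrix_apply, Matrix.one_apply, Finset.sum_ite_eq']

lemma rank_submatrix_le' {N t u : ℕ} (A : Matrix (Fin N) (Fin N) k)
    (f : Fin t → Fin N) (g : Fin u → Fin N) :
    (A.submatrix f g).rank ≤ A.rank := by
  rw [submatrix_eq_mul_mul A f g]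
  exact le_trans (Matrix.rank_mul_le_left _ _)
    (Matrix.rank_mul_le_right _ _)

/-- a nonsingular `t×t` submatrix gives rank at least `t` -/
lemma le_rank_of_submatrix {N t : ℕ} (A : Matrix (Fin N) (Fin N) k)
    (f g : Fin t → Fin N) (h : (A.submatrix f g).det ≠ 0) : t ≤ A.rank := by
  have h1 : (A.submatrix f g).rank = t := by
    rw [Matrix.rank_of_isUnit _ ((Matrix.isUnit_iff_isUnit_det _).2 (isUnit_iff_ne_zero.2 h))]
    simp
  rw [← h1]
  exact rank_submatrix_le' A f g

/-- rank at least `t` gives a nonsingular `t×t` submatrix -/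
lemma exists_submatrix_det_ne_zero {N t : ℕ} (A : Matrix (Fin N) (Fin N) k)
    (h : t ≤ A.rank) :
    ∃ f g : Fin t → Fin N, Function.Injective f ∧ Function.Injective g ∧
      (A.submatrix f g).det ≠ 0 := by
  classical
  -- Step 1: pick t linearly independent columns
  have hcols : A.rank = Module.finrank k (Submodule.span k (Set.range Aᵀ)) :=
    Matrix.rank_eq_finrank_span_cols A
  obtain ⟨b, hbsub, hbspan, hbli⟩ := exists_linearIndependent k (Set.range Aᵀ)
  have hbfin : b.Finite := Set.Finite.subset (Set.finite_range _) hbsub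
  haveI : Fintype b := hbfin.fintype
  have hcardb : Fintype.card b = A.rank := by
    have h1 := finrank_span_eq_card (b := (Subtype.val : b → (Fin N → k))) hbli
    rw [Subtype.range_val] at h1
    rw [hcols, ← hbspan, h1]
  have htb : t ≤ Fintype.card b := by omega
  -- an injection Fin t ↪ b
  let eb : b ≃ Fin (Fintype.card b) := Fintype.equivFin b
  let φ : Fin t → b := fun i => eb.symm (Fin.castLE htb i)
  have hφinj : Function.Injective φ := by
    intro x y hxy
    have := eb.symm.injective hxy
    exact Fin.castLE_injective htb this
  -- choose column indices
  have hchoice : ∀ x : b, ∃ j : Fin N, Aᵀ j = (x : Fin N → k) := fun x => hbsub x.2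
  choose g0 hg0 using hchoice
  let g : Fin t → Fin N := fun i => g0 (φ i)
  have hginj : Function.Injective g := by
    intro x y hxy
    apply hφinj
    apply Subtype.ext
    rw [← hg0 (φ x), ← hg0 (φ y)]
    exact congrArg Aᵀ hxy
  have hgli : LinearIndependent k (fun i : Fin t => Aᵀ (g i)) := by
    have : (fun i : Fin t => Aᵀ (g i)) = (Subtype.val : b → (Fin N → k)) ∘ φ := by
      funext i
      simp only [Function.comp_apply, ← hg0 (φ i)]
      rfl
    rw [this]
    exact hbli.comp φ hφinj
  -- Step 2: M' = chosen columns, has rank t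
  let M' : Matrix (Fin N) (Fin t) k := A.submatrix id g
  have hM'T : M'ᵀ = fun i => Aᵀ (g i) := by
    funext i j
    simp [M', Matrix.transpose_apply, Matrix.submatrix_apply]
  have hrankM' : M'.rank = t := by
    rw [Matrix.rank_eq_finrank_span_cols, Matrix.col, hM'T, finrank_span_eq_card hgli, Fintype.card_fin]
  -- Step 3: rows of M'ᵀ: choose t linearly independent ones
  have hrankM'T : (M'ᵀ).rank = t := by rw [Matrix.rank_transpose, hrankM']
  have hrows : (M'ᵀ).rank = Module.finrank k (Submodule.span k (Set.range M')) := by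
    rw [Matrix.rank_eq_finrank_span_cols, Matrix.col, Matrix.transpose_transpose]
  obtain ⟨c, hcsub, hcspan, hcli⟩ := exists_linearIndependent k (Set.range M')
  have hcfin : c.Finite := Set.Finite.subset (Set.finite_range _) hcsub
  haveI : Fintype c := hcfin.fintype
  have hcardc : Fintype.card c = t := by
    have h1 := finrank_span_eq_card (b := (Subtype.val : c → (Fin t → k))) hcli
    rw [Subtype.range_val] at h1
    rw [← h1, hcspan, ← hrows, hrankM'T]
  let ec : c ≃ Fin t := Fintype.equivFinOfCardEq hcardc
  have hchoice2 : ∀ x : c, ∃ i : Fin N, M' i = (x : Fin t → k) := fun x => hcsub x.2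
  choose f0 hf0 using hchoice2
  let f : Fin t → Fin N := fun i => f0 (ec.symm i)
  have hfinj : Function.Injective f := by
    intro x y hxy
    apply ec.symm.injective
    apply Subtype.ext
    rw [← hf0 (ec.symm x), ← hf0 (ec.symm y)]
    exact congrArg M' hxy
  refine ⟨f, g, hfinj, hginj, ?_⟩
  have hsub : A.submatrix f g = M'.submatrix f id := by
    ext i j
    simp [M', Matrix.submatrix_apply]
  have hrowsS : (fun i : Fin t => (A.submatrix f g) i) =
      (Subtype.val : c → (Fin t → k)) ∘ ec.symm := by
    funext i
    have : (A.submatrix f g) i = M' (f i) := by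
      funext j
      simp [M', Matrix.submatrix_apply]
    rw [this]
    simp only [Function.comp_apply, f, hf0 (ec.symm i)]
  have hliS : LinearIndependent k (fun i : Fin t => (A.submatrix f g) i) := by
    rw [hrowsS]
    exact hcli.comp ec.symm ec.symm.injective
  have := Matrix.linearIndependent_rows_iff_isUnit.1 hliS
  intro hdet
  have h2 : IsUnit (A.submatrix f g).det := (Matrix.isUnit_iff_isUnit_det _).1 this
  rw [hdet] at h2
  simp at h2

end RankLemmas
section Canon

variable {k : Type*} [Field k]

lemma rank_congr {N : ℕ} (M Q : Matrix (Fin N) (Fin N) k) (hQ : IsUnit Q) :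
    (Q * M * Qᵀ).rank = M.rank := by
  obtain ⟨u, hu⟩ := hQ
  set R : Matrix (Fin N) (Fin N) k := ↑u⁻¹ with hR
  have hRQ : R * Q = 1 := by rw [hR, ← hu]; exact_mod_cast u.inv_mul
  have hQRT : Qᵀ * Rᵀ = 1 := by
    rw [← Matrix.transpose_mul, hRQ, Matrix.transpose_one]
  apply le_antisymm
  · exact le_trans (Matrix.rank_mul_le_left _ _) (Matrix.rank_mul_le_right _ _)
  · have hM : M = R * (Q * M * Qᵀ) * Rᵀ := by
      calc M = 1 * M * 1 := by rw [Matrix.one_mul, Matrix.mul_one]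
        _ = (R * Q) * M * (Qᵀ * Rᵀ) := by rw [hRQ, hQRT]
        _ = R * (Q * M * Qᵀ) * Rᵀ := by
            simp only [Matrix.mul_assoc]
    conv_lhs => rw [hM]
    exact le_trans (Matrix.rank_mul_le_left _ _) (Matrix.rank_mul_le_right _ _)

variable [IsAlgClosed k] [CharZero k]

lemma exists_canon {N : ℕ} (M : Matrix (Fin N) (Fin N) k) (hsym : Mᵀ = M) :
    ∃ Q : Matrix (Fin N) (Fin N) k, IsUnit Q ∧
      Q * M * Qᵀ = Matrix.diagonal (fun i : Fin N => if (i : ℕ) < M.rank then (1:k) else 0) := by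
  classical
  haveI : Invertible (2 : k) := invertibleOfNonzero (by norm_num)
  set B : (Fin N → k) →ₗ[k] (Fin N → k) →ₗ[k] k := Matrix.toLinearMap₂' k M with hB
  have hBapply : ∀ x y : Fin N → k, B x y = ∑ s, ∑ t, x s * M s t * y t := by
    intro x y
    rw [hB, Matrix.toLinearMap₂'_apply]
    apply Finset.sum_congr rfl; intro s _
    apply Finset.sum_congr rfl; intro t _
    rw [smul_eq_mul, smul_eq_mul]; ring
  have hBsymm : LinearMap.IsSymm B := by
    rw [LinearMap.isSymm_def]
    intro x y
    simp only [RingHom.id_apply]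
    rw [hBapply, hBapply, Finset.sum_comm]
    apply Finset.sum_congr rfl; intro s _
    apply Finset.sum_congr rfl; intro t _
    have hMts : M t s = M s t := congrFun (congrFun hsym s) t
    rw [hMts]; ring
  obtain ⟨v, hv⟩ := LinearMap.BilinForm.exists_orthogonal_basis hBsymm
  have hfr : Module.finrank k (Fin N → k) = N := Module.finrank_fin_fun k
  set w := v.reindex (finCongr hfr) with hw
  have hortho : ∀ i j : Fin N, i ≠ j → B (w i) (w j) = 0 := by
    intro i j hij
    rw [hw, Module.Basis.reindex_apply, Module.Basis.reindex_apply]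
    exact hv (fun hc => hij (by simpa using congrArg (finCongr hfr) hc))
  set Q1 : Matrix (Fin N) (Fin N) k := Matrix.of fun i j => w i j with hQ1def
  have hQ1 : IsUnit Q1 := by
    rw [← Matrix.linearIndependent_rows_iff_isUnit]
    have : Q1.row = fun i => w i := by funext i; rfl
    rw [this]
    exact w.linearIndependent
  set d : Fin N → k := fun i => B (w i) (w i) with hd
  have hQ1M : Q1 * M * Q1ᵀ = Matrix.diagonal d := by
    ext i j
    have hform : (Q1 * M * Q1ᵀ) i j = B (w i) (w j) := by
      rw [hBapply, Matrix.mul_apply]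
      simp_rw [Matrix.mul_apply, Matrix.transpose_apply, Finset.sum_mul]
      rw [Finset.sum_comm]
      rfl
    rw [hform]
    rcases eq_or_ne i j with rfl | hij
    · simp [Matrix.diagonal_apply_eq, hd]
    · rw [hortho i j hij, Matrix.diagonal_apply_ne _ hij]
  -- the rank is the number of nonzero diagonal entries
  set u : ℕ := M.rank with hu
  have hcard : Fintype.card {i // d i ≠ 0} = u := by
    rw [hu, ← rank_congr M Q1 hQ1, hQ1M, Matrix.rank_diagonal]
  have huN : u ≤ N := by
    rw [hu]
    have := Matrix.rank_le_card_width M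
    simpa using this
  have hcardc : Fintype.card {i // ¬ d i ≠ 0} = N - u := by
    rw [Fintype.card_subtype_compl, hcard, Fintype.card_fin]
  -- build the sorting permutation
  set e1 : Fin u ≃ {i // d i ≠ 0} := (Fintype.equivFinOfCardEq hcard).symm with he1
  set e2 : Fin (N - u) ≃ {i // ¬ d i ≠ 0} := (Fintype.equivFinOfCardEq hcardc).symm with he2
  have hadd : u + (N - u) = N := Nat.add_sub_cancel' huN
  set e : Fin N ≃ Fin N :=
    (((finCongr hadd).symm.trans finSumFinEquiv.symm).trans
      (Equiv.sumCongr e1 e2)).trans (Equiv.sumCompl (fun i => d i ≠ 0)) with he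
  have heprop : ∀ i : Fin N, d (e i) ≠ 0 ↔ (i : ℕ) < u := by
    intro i
    rcases lt_or_ge (i : ℕ) u with h | h
    · have hsum : finSumFinEquiv.symm ((finCongr hadd).symm i)
          = Sum.inl (⟨(i : ℕ), h⟩ : Fin u) := by
        rw [Equiv.symm_apply_eq, finSumFinEquiv_apply_left]
        apply Fin.ext
        simp
      have : e i = (e1 ⟨(i : ℕ), h⟩ : {i // d i ≠ 0}).val := by
        rw [he]
        simp only [Equiv.trans_apply, hsum, Equiv.sumCongr_apply, Sum.map_inl,
          Equiv.sumCompl_apply_inl]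
      rw [this]
      exact iff_of_true (e1 ⟨(i : ℕ), h⟩).2 h
    · have hlt : (i : ℕ) - u < N - u := by
        have : (i : ℕ) < N := i.2
        omega
      have hsum : finSumFinEquiv.symm ((finCongr hadd).symm i)
          = Sum.inr (⟨(i : ℕ) - u, hlt⟩ : Fin (N - u)) := by
        rw [Equiv.symm_apply_eq, finSumFinEquiv_apply_right]
        apply Fin.ext
        simp [Fin.natAdd]
        omega
      have : e i = (e2 ⟨(i : ℕ) - u, hlt⟩ : {i // ¬ d i ≠ 0}).val := by
        rw [he]
        simp only [Equiv.trans_apply, hsum, Equiv.sumCongr_apply, Sum.map_inr,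
          Equiv.sumCompl_apply_inr]
      rw [this]
      have h2 := (e2 ⟨(i : ℕ) - u, hlt⟩).2
      simp only [ne_eq, not_not] at h2
      constructor
      · intro hc; exact absurd h2 hc
      · intro hc; omega
  -- scaling coefficients
  have hsqrt : ∀ i : Fin N, (i : ℕ) < u → ∃ z : k, z ^ 2 = (d (e i))⁻¹ :=
    fun i _ => IsAlgClosed.exists_pow_nat_eq ((d (e i))⁻¹) (by norm_num)
  set c : Fin N → k := fun i =>
    if h : (i : ℕ) < u then Classical.choose (hsqrt i h) else 1 with hc
  have hc2 : ∀ i : Fin N, (i : ℕ) < u → c i ^ 2 = (d (e i))⁻¹ := by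
    intro i h
    rw [hc]
    simp only [dif_pos h]
    exact Classical.choose_spec (hsqrt i h)
  have hcne : ∀ i : Fin N, c i ≠ 0 := by
    intro i
    by_cases h : (i : ℕ) < u
    · intro hc0
      have h2 := hc2 i h
      rw [hc0, zero_pow (by norm_num)] at h2
      exact inv_ne_zero ((heprop i).2 h) h2.symm
    · rw [hc]; simp [h]
  -- the permutation/scaling matrix
  set G : Matrix (Fin N) (Fin N) k := Matrix.of fun i s => if s = e i then c i else 0 with hG
  have hGunit : IsUnit G := by
    rw [← Matrix.linearIndependent_rows_iff_isUnit]
    have hbase : LinearIndependent k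
        (fun i : Fin N => (Pi.single (e i) (1:k) : Fin N → k)) := by
      have h1 := (Pi.basisFun k (Fin N)).linearIndependent
      have h2 := h1.comp e e.injective
      have : ((Pi.basisFun k (Fin N)) : Fin N → (Fin N → k)) ∘ e
          = fun i => (Pi.single (e i) (1:k) : Fin N → k) := by
        funext i
        simp [Function.comp_apply, Pi.basisFun_apply]
      rwa [this] at h2
    have h3 := hbase.units_smul (fun i => Units.mk0 (c i) (hcne i))
    have : ((fun i => Units.mk0 (c i) (hcne i)) •
          fun i : Fin N => (Pi.single (e i) (1:k) : Fin N → k))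
        = fun i : Fin N => G i := by
      funext i s
      simp only [Pi.smul_apply', Units.smul_def, Units.val_mk0, Pi.smul_apply, smul_eq_mul]
      rw [hG]
      simp only [Matrix.of_apply, Pi.single_apply]
      by_cases hs : s = e i <;> simp [hs]
    rwa [this] at h3
  have hGform : ∀ Z : Matrix (Fin N) (Fin N) k,
      G * Z * Gᵀ = Matrix.of fun i j => c i * c j * Z (e i) (e j) := by
    intro Z
    ext i j
    rw [Matrix.mul_apply]
    have hinner : ∀ t, (G * Z) i t = c i * Z (e i) t := by
      intro t
      rw [Matrix.mul_apply]
      rw [Finset.sum_eq_single (e i)]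
      · rw [hG]; simp
      · intro s _ hs
        rw [hG]; simp [hs]
      · intro hs; exact absurd (Finset.mem_univ _) hs
    simp only [hinner, Matrix.transpose_apply]
    rw [Finset.sum_eq_single (e j)]
    · rw [hG]; simp [Matrix.of_apply]; ring
    · intro t _ ht
      rw [hG]; simp [ht]
    · intro hs; exact absurd (Finset.mem_univ _) hs
  -- final matrix
  refine ⟨G * Q1, hGunit.mul hQ1, ?_⟩
  have : G * Q1 * M * (G * Q1)ᵀ = G * (Q1 * M * Q1ᵀ) * Gᵀ := by
    rw [Matrix.transpose_mul]
    simp only [Matrix.mul_assoc]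
  rw [this, hQ1M, hGform]
  ext i j
  rcases eq_or_ne i j with rfl | hij
  · simp only [Matrix.of_apply, Matrix.diagonal_apply_eq]
    by_cases h : (i : ℕ) < u
    · have hdne : d (e i) ≠ 0 := (heprop i).2 h
      have : c i * c i = (d (e i))⁻¹ := by
        have := hc2 i h
        rwa [pow_two] at this
      rw [this, if_pos h]
      field_simp
    · have hd0 : d (e i) = 0 := by
        by_contra hc0
        exact h ((heprop i).1 hc0)
      rw [hd0, if_neg h]
      ring
  · have : e i ≠ e j := fun hc => hij (e.injective hc)
    simp [Matrix.of_apply, Matrix.diagonal_apply_ne _ hij, Matrix.diagonal_apply_ne _ this]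
end Canon
section Main

variable {k : Type*} [Field k]

/-- the rank-`t` "identity-corner" matrix -/
def Emat (t : ℕ) : ℕ → ℕ → k := fun i j => if i = j ∧ i < t then 1 else 0

lemma Emat_symm (t : ℕ) : ∀ i j : ℕ, (Emat t : ℕ → ℕ → k) i j = Emat t j i := by
  intro i j
  unfold Emat
  rcases eq_or_ne i j with rfl | hij
  · rfl
  · rw [if_neg (fun hc => hij hc.1), if_neg (fun hc => hij hc.1.symm)]

lemma corner_Emat (N t : ℕ) : corner N (Emat t : ℕ → ℕ → k)
    = Matrix.diagonal (fun i : Fin N => if (i : ℕ) < t then (1:k) else 0) := by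
  ext i j
  rcases eq_or_ne i j with rfl | hij
  · simp [corner, Emat, Matrix.diagonal_apply_eq]
  · have : (i : ℕ) ≠ (j : ℕ) := fun hc => hij (Fin.ext hc)
    simp [corner, Emat, Matrix.diagonal_apply_ne _ hij, this]

variable {X : Set (ℕ → ℕ → k)}

/-- transport along the congruence action of an embedded `N×N` matrix -/
lemma transport (hGL : ∀ g : ℕ → ℕ → k, IsFinGL g → ∀ A ∈ X, congAct g A ∈ X)
    {A : ℕ → ℕ → k} (hA : A ∈ X) {N : ℕ} (Q : Matrix (Fin N) (Fin N) k) (hQ : IsUnit Q) :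
    ∃ A' ∈ X, ∀ (i j : ℕ) (hi : i < N) (hj : j < N),
      A' i j = (Q * corner N A * Qᵀ) ⟨i, hi⟩ ⟨j, hj⟩ :=
  ⟨congAct (embed N Q) A, hGL _ (embed_isFinGL N Q hQ) A hA,
    fun i j hi hj => congAct_embed_corner N Q A i j hi hj⟩

variable [IsAlgClosed k] [CharZero k]

lemma sqrt_ne_zero {ε : k} (hε : ε ≠ 0) : ∃ z : k, z ^ 2 = ε ∧ z ≠ 0 := by
  obtain ⟨z, hz⟩ := IsAlgClosed.exists_pow_nat_eq ε (n := 2) (by norm_num)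
  exact ⟨z, hz, fun hc => hε (by rw [← hz, hc]; ring)⟩

lemma isUnit_diag {N : ℕ} (c : Fin N → k) (hc : ∀ i, c i ≠ 0) :
    IsUnit (Matrix.diagonal c) := by
  rw [Matrix.isUnit_iff_isUnit_det, Matrix.det_diagonal]
  exact isUnit_iff_ne_zero.2 (Finset.prod_ne_zero_iff.2 fun i _ => hc i)

/-- if some element of `X` has a nonsingular `t×t` submatrix, then `Emat t ∈ X`. -/
lemma Emat_mem (hGL : ∀ g : ℕ → ℕ → k, IsFinGL g → ∀ A ∈ X, congAct g A ∈ X)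
    (hcl : ∃ C : Set (ℕ → ℕ → k), IsZClosedMat' C ∧ X = {A | ∀ i j : ℕ, A i j = A j i} ∩ C)
    {A : ℕ → ℕ → k} (hA : A ∈ X) (t : ℕ)
    (hw : ∃ rr cc : Fin t → ℕ, Function.Injective rr ∧ Function.Injective cc ∧
      (Matrix.of fun i j : Fin t => A (rr i) (cc j)).det ≠ 0) :
    (Emat t : ℕ → ℕ → k) ∈ X := by
  classical
  have hAsym : ∀ i j : ℕ, A i j = A j i := by
    obtain ⟨C, _, hXC⟩ := hcl
    exact (hXC ▸ hA).1
  apply mem_of_corner_limit hcl _ (Emat_symm t)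
  intro N
  obtain ⟨rr, cc, hrr, hcc, hdet⟩ := hw
  set Nb : ℕ := (Finset.univ.sup fun i : Fin t => max (rr i) (cc i)) + 1 with hNb
  set N' : ℕ := max N (max t Nb) with hN'
  have hNN' : N ≤ N' := le_max_left _ _
  have htN' : t ≤ N' := le_trans (le_max_left _ _) (le_max_right _ _)
  have hrrlt : ∀ i : Fin t, rr i < N' := by
    intro i
    have h1 : max (rr i) (cc i) ≤ Nb - 1 := by
      rw [hNb]; simp only [Nat.add_sub_cancel]
      exact Finset.le_sup (f := fun i : Fin t => max (rr i) (cc i)) (Finset.mem_univ i)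
    have h2 : Nb ≤ N' := le_trans (le_max_right _ _) (le_max_right _ _)
    omega
  have hcclt : ∀ i : Fin t, cc i < N' := by
    intro i
    have h1 : max (rr i) (cc i) ≤ Nb - 1 := by
      rw [hNb]; simp only [Nat.add_sub_cancel]
      exact Finset.le_sup (f := fun i : Fin t => max (rr i) (cc i)) (Finset.mem_univ i)
    have h2 : Nb ≤ N' := le_trans (le_max_right _ _) (le_max_right _ _)
    omega
  set C0 := corner N' A with hC0
  have hC0sym : C0ᵀ = C0 := by
    ext i j
    exact hAsym j.1 i.1
  -- the corner has rank at least t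
  have hrank : t ≤ C0.rank := by
    apply le_rank_of_submatrix C0 (fun i => ⟨rr i, hrrlt i⟩) (fun i => ⟨cc i, hcclt i⟩)
    have : C0.submatrix (fun i => (⟨rr i, hrrlt i⟩ : Fin N')) (fun i => ⟨cc i, hcclt i⟩)
        = Matrix.of fun i j : Fin t => A (rr i) (cc j) := by
      ext i j; rfl
    rw [this]
    exact hdet
  obtain ⟨Q, hQ, hcanon⟩ := exists_canon C0 hC0sym
  set s := C0.rank with hs
  have hsN' : s ≤ N' := by
    have := Matrix.rank_le_card_width C0
    simpa using this
  refine ⟨fun i j => if i = j ∧ t ≤ i ∧ i < s then 1 else 0, ?_⟩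
  intro ε hε
  obtain ⟨z, hz, hzne⟩ := sqrt_ne_zero hε
  set c : Fin N' → k := fun i => if (i : ℕ) < t then 1 else z with hc
  have hcne : ∀ i, c i ≠ 0 := by
    intro i; rw [hc]; dsimp only; split_ifs
    · exact one_ne_zero
    · exact hzne
  set Sc := Matrix.diagonal c with hSc
  have hScunit : IsUnit Sc := isUnit_diag c hcne
  obtain ⟨A', hA'X, hA'⟩ := transport hGL hA (Sc * Q) (hScunit.mul hQ)
  refine ⟨A', hA'X, ?_⟩
  intro i j hi hj
  have hiN' : i < N' := lt_of_lt_of_le hi hNN'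
  have hjN' : j < N' := lt_of_lt_of_le hj hNN'
  rw [hA' i j hiN' hjN']
  have hform : Sc * Q * corner N' A * (Sc * Q)ᵀ
      = Matrix.diagonal (fun i : Fin N' =>
          c i * ((if (i : ℕ) < s then (1:k) else 0) * c i)) := by
    rw [Matrix.transpose_mul]
    have h1 : Sc * Q * corner N' A * (Qᵀ * Scᵀ) = Sc * (Q * C0 * Qᵀ) * Scᵀ := by
      rw [hC0]; simp only [Matrix.mul_assoc]
    rw [h1, hcanon, hSc, Matrix.diagonal_transpose, Matrix.diagonal_mul_diagonal,
      Matrix.diagonal_mul_diagonal]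
    apply congrArg Matrix.diagonal
    funext i
    ring
  rw [hform, Matrix.diagonal]
  simp only [Matrix.of_apply]
  unfold Emat
  rcases eq_or_ne i j with rfl | hij
  · have : (⟨i, hiN'⟩ : Fin N') = ⟨i, hiN'⟩ := rfl
    rw [if_pos rfl]
    rw [hc]
    dsimp only
    by_cases h1 : i < t
    · have h2 : i < s := lt_of_lt_of_le h1 hrank
      rw [if_pos h1, if_pos h2, if_pos ⟨rfl, h1⟩, if_neg (by omega)]
      ring
    · by_cases h2 : i < s
      · rw [if_neg h1, if_pos h2, if_neg (fun hc => h1 hc.2), if_pos ⟨rfl, by omega, h2⟩]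
        rw [← hz]; ring
      · rw [if_neg h1, if_neg h2, if_neg (fun hc => h1 hc.2), if_neg (by omega)]
        ring
  · have hne : (⟨i, hiN'⟩ : Fin N') ≠ ⟨j, hjN'⟩ := fun hc => hij (by
      have := congrArg Fin.val hc
      simpa using this)
    rw [if_neg (by simpa using hne), if_neg (fun hc => hij hc.1), if_neg (fun hc => hij hc.1)]
    ring

end Main
section Main2

variable {k : Type*} [Field k] {X : Set (ℕ → ℕ → k)}

/-- rank bound on all corners from vanishing minors -/
lemma corner_rank_le {B : ℕ → ℕ → k} {r : ℕ}
    (h : ∀ rr cc : Fin (r + 1) → ℕ, Function.Injective rr → Function.Injective cc →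
      (Matrix.of fun i j : Fin (r + 1) => B (rr i) (cc j)).det = 0)
    (N : ℕ) : (corner N B).rank ≤ r := by
  by_contra hc
  push_neg at hc
  obtain ⟨f, g, hf, hg, hdet⟩ := exists_submatrix_det_ne_zero (corner N B) (t := r + 1) hc
  apply hdet
  have : (corner N B).submatrix f g
      = Matrix.of fun i j : Fin (r + 1) => B ((Fin.val ∘ f) i) ((Fin.val ∘ g) j) := by
    ext i j; rfl
  rw [this]
  exact h _ _ (Fin.val_injective.comp hf) (Fin.val_injective.comp hg)

/-- vanishing minors from rank bounds on all corners -/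
lemma minors_vanish {B : ℕ → ℕ → k} {r : ℕ} (h : ∀ N, (corner N B).rank ≤ r) :
    ∀ rr cc : Fin (r + 1) → ℕ, Function.Injective rr → Function.Injective cc →
      (Matrix.of fun i j : Fin (r + 1) => B (rr i) (cc j)).det = 0 := by
  intro rr cc hrr hcc
  by_contra hdet
  set N : ℕ := (Finset.univ.sup fun i : Fin (r + 1) => max (rr i) (cc i)) + 1 with hN
  have hrlt : ∀ i : Fin (r + 1), rr i < N ∧ cc i < N := by
    intro i
    have h1 : max (rr i) (cc i) ≤ N - 1 := by
      rw [hN]; simp only [Nat.add_sub_cancel]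
      exact Finset.le_sup (f := fun i : Fin (r + 1) => max (rr i) (cc i)) (Finset.mem_univ i)
    omega
  have hle : r + 1 ≤ (corner N B).rank := by
    apply le_rank_of_submatrix (corner N B) (fun i => ⟨rr i, (hrlt i).1⟩)
      (fun i => ⟨cc i, (hrlt i).2⟩)
    have : (corner N B).submatrix (fun i => (⟨rr i, (hrlt i).1⟩ : Fin N))
        (fun i => ⟨cc i, (hrlt i).2⟩) = Matrix.of fun i j : Fin (r + 1) => B (rr i) (cc j) := by
      ext i j; rfl
    rw [this]
    exact hdet
  have := h N
  omega

variable [IsAlgClosed k] [CharZero k]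

/-- if `Emat r ∈ X` and all corners of symmetric `B` have rank at most `r`, then `B ∈ X` -/
lemma mem_of_rank_le (hGL : ∀ g : ℕ → ℕ → k, IsFinGL g → ∀ A ∈ X, congAct g A ∈ X)
    (hcl : ∃ C : Set (ℕ → ℕ → k), IsZClosedMat' C ∧ X = {A | ∀ i j : ℕ, A i j = A j i} ∩ C)
    (r : ℕ) (hE : (Emat r : ℕ → ℕ → k) ∈ X)
    {B : ℕ → ℕ → k} (hBsym : ∀ i j : ℕ, B i j = B j i)
    (hrk : ∀ N, (corner N B).rank ≤ r) :
    B ∈ X := by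
  classical
  apply mem_of_corner_limit hcl _ hBsym
  intro N
  set N' : ℕ := max N r with hN'
  have hNN' : N ≤ N' := le_max_left _ _
  have hrN' : r ≤ N' := le_max_right _ _
  set C0 := corner N' B with hC0
  have hC0sym : C0ᵀ = C0 := by
    ext i j
    exact hBsym j.1 i.1
  obtain ⟨Q, hQ, hcanon⟩ := exists_canon C0 hC0sym
  set u := C0.rank with hu
  have hur : u ≤ r := hrk N'
  -- inverse of Q
  obtain ⟨Qu, hQu⟩ := hQ
  set R : Matrix (Fin N') (Fin N') k := ↑Qu⁻¹ with hR
  have hRQ : R * Q = 1 := by rw [hR, ← hQu]; exact_mod_cast Qu.inv_mul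
  have hQRT : Qᵀ * Rᵀ = 1 := by rw [← Matrix.transpose_mul, hRQ, Matrix.transpose_one]
  have hRunit : IsUnit R := by
    rw [hR]; exact (Qu⁻¹).isUnit
  have hC0eq : C0 = R * Matrix.diagonal (fun i : Fin N' => if (i : ℕ) < u then (1:k) else 0)
      * Rᵀ := by
    rw [← hcanon]
    calc C0 = 1 * C0 * 1 := by rw [Matrix.one_mul, Matrix.mul_one]
      _ = (R * Q) * C0 * (Qᵀ * Rᵀ) := by rw [hRQ, hQRT]
      _ = R * (Q * C0 * Qᵀ) * Rᵀ := by simp only [Matrix.mul_assoc]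
  set Dd : Matrix (Fin N') (Fin N') k :=
    Matrix.diagonal (fun i : Fin N' => if u ≤ (i : ℕ) ∧ (i : ℕ) < r then (1:k) else 0) with hDd
  refine ⟨fun i j => if h : i < N' ∧ j < N' then (R * Dd * Rᵀ) ⟨i, h.1⟩ ⟨j, h.2⟩ else 0, ?_⟩
  intro ε hε
  obtain ⟨z, hz, hzne⟩ := sqrt_ne_zero hε
  set c : Fin N' → k := fun i => if u ≤ (i : ℕ) ∧ (i : ℕ) < r then z else 1 with hc
  have hcne : ∀ i, c i ≠ 0 := by
    intro i; rw [hc]; dsimp only; split_ifs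
    · exact hzne
    · exact one_ne_zero
  set Sc := Matrix.diagonal c with hSc
  have hScunit : IsUnit Sc := isUnit_diag c hcne
  obtain ⟨A', hA'X, hA'⟩ := transport hGL hE (R * Sc) (hRunit.mul hScunit)
  refine ⟨A', hA'X, ?_⟩
  intro i j hi hj
  have hiN' : i < N' := lt_of_lt_of_le hi hNN'
  have hjN' : j < N' := lt_of_lt_of_le hj hNN'
  rw [hA' i j hiN' hjN']
  have hmid : Sc * corner N' (Emat r) * Scᵀ
      = Matrix.diagonal (fun i : Fin N' => if (i : ℕ) < u then (1:k) else 0) + ε • Dd := by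
    rw [corner_Emat, hSc, Matrix.diagonal_transpose, Matrix.diagonal_mul_diagonal,
      Matrix.diagonal_mul_diagonal, hDd]
    ext x y
    rcases eq_or_ne x y with rfl | hxy
    · rw [Matrix.diagonal_apply_eq, Matrix.add_apply, Matrix.smul_apply,
        Matrix.diagonal_apply_eq, Matrix.diagonal_apply_eq, smul_eq_mul]
      rw [hc]
      dsimp only
      by_cases h1 : (x : ℕ) < u
      · rw [if_neg (by omega), if_pos (by omega), if_pos h1, if_neg (by omega)]
        ring
      · by_cases h2 : (x : ℕ) < r
        · rw [if_pos ⟨by omega, h2⟩, if_pos h2, if_neg h1, if_pos ⟨by omega, h2⟩]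
          rw [← hz]; ring
        · rw [if_neg (by omega), if_neg (by omega), if_neg h1, if_neg (by omega)]
          ring
    · rw [Matrix.diagonal_apply_ne _ hxy, Matrix.add_apply, Matrix.smul_apply,
        Matrix.diagonal_apply_ne _ hxy, Matrix.diagonal_apply_ne _ hxy, smul_eq_mul,
        mul_zero, add_zero]
  have hform : R * Sc * corner N' (Emat r) * (R * Sc)ᵀ
      = C0 + ε • (R * Dd * Rᵀ) := by
    rw [Matrix.transpose_mul]
    have h1 : R * Sc * corner N' (Emat r) * (Scᵀ * Rᵀ)
        = R * (Sc * corner N' (Emat r) * Scᵀ) * Rᵀ := by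
      simp only [Matrix.mul_assoc]
    rw [h1, hmid, Matrix.mul_add, Matrix.add_mul, hC0eq]
    congr 1
    rw [Matrix.mul_smul, Matrix.smul_mul]
  rw [hform]
  have : (C0 + ε • (R * Dd * Rᵀ)) ⟨i, hiN'⟩ ⟨j, hjN'⟩
      = C0 ⟨i, hiN'⟩ ⟨j, hjN'⟩ + ε * (R * Dd * Rᵀ) ⟨i, hiN'⟩ ⟨j, hjN'⟩ := by
    simp [Matrix.add_apply, Matrix.smul_apply]
  rw [this]
  dsimp only
  rw [dif_pos ⟨hiN', hjN'⟩]
  rfl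

end Main2
end Aux

open Matrix in
/-- **Classification of GL-stable closed subsets of the space of symmetric
matrices**: such a subset is empty, everything, or a rank-bounded set; and
exactly one of these three alternatives holds. -/
theorem classification_GL_stable_closed_subsets_of_symmetric_matrices
    {k : Type*} [Field k] [IsAlgClosed k] [CharZero k]
    (X : Set (ℕ → ℕ → k)) (hXS : X ⊆ SymMats k)
    (hGL : ∀ g : ℕ → ℕ → k, IsFinGL g → ∀ A ∈ X, congAct g A ∈ X)
    (hcl : ∃ C : Set (ℕ → ℕ → k), IsZClosedMat C ∧ X = SymMats k ∩ C) :
    (X = ∅ ∧ X ≠ SymMats k ∧ ¬∃ r : ℕ, X = SymRankLe k r) ∨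
    (X ≠ ∅ ∧ X = SymMats k ∧ ¬∃ r : ℕ, X = SymRankLe k r) ∨
    (X ≠ ∅ ∧ X ≠ SymMats k ∧ ∃ r : ℕ, X = SymRankLe k r) := by
  classical
  have hcl' : ∃ C : Set (ℕ → ℕ → k), Aux.IsZClosedMat' C ∧
      X = {A | ∀ i j : ℕ, A i j = A j i} ∩ C := hcl
  -- the identity minor of `Emat (r+1)`
  have hEm : ∀ r : ℕ, (Aux.Emat (r + 1) : ℕ → ℕ → k) ∉ SymRankLe k r := by
    intro r hmem
    have h := hmem.2 (fun i : Fin (r + 1) => (i : ℕ)) (fun i : Fin (r + 1) => (i : ℕ))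
      Fin.val_injective Fin.val_injective
    have hid : (Matrix.of fun i j : Fin (r + 1) =>
        (Aux.Emat (r + 1) : ℕ → ℕ → k) (i : ℕ) (j : ℕ)) = (1 : Matrix (Fin (r+1)) (Fin (r+1)) k) := by
      ext i j
      have hlt : (i : ℕ) < r + 1 := i.isLt
      simp [Aux.Emat, Matrix.one_apply, Fin.val_inj, hlt, Fin.is_le]
    rw [hid, Matrix.det_one] at h
    exact one_ne_zero h
  have hEsymMats : ∀ t : ℕ, (Aux.Emat t : ℕ → ℕ → k) ∈ SymMats k := fun t => Aux.Emat_symm t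
  by_cases hempty : X = ∅
  · left
    refine ⟨hempty, ?_, ?_⟩
    · intro h
      have h0 : (fun _ _ => 0 : ℕ → ℕ → k) ∈ X := by
        rw [h]; intro i j; rfl
      rw [hempty] at h0; exact h0
    · rintro ⟨r, hr⟩
      have h0 : (fun _ _ => 0 : ℕ → ℕ → k) ∈ X := by
        rw [hr]
        refine ⟨fun i j => rfl, fun rr cc _ _ => ?_⟩
        have hz : (Matrix.of fun i j : Fin (r + 1) => (0 : k))
            = (0 : Matrix (Fin (r+1)) (Fin (r+1)) k) := rfl
        rw [hz, Matrix.det_zero]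
      rw [hempty] at h0; exact h0
  · obtain ⟨A0, hA0⟩ := Set.nonempty_iff_ne_empty.2 hempty
    by_cases hub : ∀ t : ℕ, ∃ A ∈ X, ∃ rr cc : Fin t → ℕ,
        Function.Injective rr ∧ Function.Injective cc ∧
        (Matrix.of fun i j : Fin t => A (rr i) (cc j)).det ≠ 0
    · right; left
      have hXeq : X = SymMats k := by
        apply Set.eq_of_subset_of_subset hXS
        intro B hB
        apply Aux.mem_of_corner_limit hcl' B hB
        intro N
        set C0 := Aux.corner N B with hC0
        have hC0sym : C0ᵀ = C0 := by ext i j; exact hB j.1 i.1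
        obtain ⟨Q, hQ, hcanon⟩ := Aux.exists_canon C0 hC0sym
        set u := C0.rank with hu
        obtain ⟨A, hA, hw⟩ := hub u
        have hE : (Aux.Emat u : ℕ → ℕ → k) ∈ X := Aux.Emat_mem hGL hcl' hA u hw
        obtain ⟨Qu, hQu⟩ := hQ
        set R : Matrix (Fin N) (Fin N) k := ↑Qu⁻¹ with hR
        have hRQ : R * Q = 1 := by rw [hR, ← hQu]; exact_mod_cast Qu.inv_mul
        have hQRT : Qᵀ * Rᵀ = 1 := by rw [← Matrix.transpose_mul, hRQ, Matrix.transpose_one]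
        have hRunit : IsUnit R := by rw [hR]; exact (Qu⁻¹).isUnit
        obtain ⟨A', hA'X, hA'⟩ := Aux.transport hGL hE R hRunit
        refine ⟨fun _ _ => 0, fun ε hε => ⟨A', hA'X, ?_⟩⟩
        intro i j hi hj
        rw [hA' i j hi hj]
        have hRC : R * Aux.corner N (Aux.Emat u) * Rᵀ = C0 := by
          rw [Aux.corner_Emat, ← hcanon]
          calc R * (Q * C0 * Qᵀ) * Rᵀ = (R * Q) * C0 * (Qᵀ * Rᵀ) := by
                simp only [Matrix.mul_assoc]
            _ = C0 := by rw [hRQ, hQRT, Matrix.one_mul, Matrix.mul_one]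
        rw [hRC]
        dsimp only
        rw [mul_zero, add_zero]
        rfl
      refine ⟨hempty, hXeq, ?_⟩
      rintro ⟨r, hr⟩
      exact hEm r (hr ▸ (hXeq ▸ hEsymMats (r + 1)))
    · right; right
      push_neg at hub
      obtain ⟨t0, ht0⟩ := hub
      set P : ℕ → Prop := fun r => ∀ A ∈ X, ∀ rr cc : Fin (r + 1) → ℕ,
        Function.Injective rr → Function.Injective cc →
        (Matrix.of fun i j : Fin (r + 1) => A (rr i) (cc j)).det = 0 with hP
      have hPex : ∃ r, P r := by
        rcases t0 with _ | r
        · exfalso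
          have h := ht0 A0 hA0 (fun x => x.elim0) (fun x => x.elim0)
            (fun a => a.elim0) (fun a => a.elim0)
          rw [Matrix.det_fin_zero] at h
          exact one_ne_zero h
        · exact ⟨r, ht0⟩
      set r0 : ℕ := Nat.find hPex with hr0
      have hPr0 : P r0 := Nat.find_spec hPex
      have hXsub : X ⊆ SymRankLe k r0 := fun A hA => ⟨hXS hA, hPr0 A hA⟩
      -- a witness of a nonsingular r0×r0 submatrix in X
      have hwitness : ∃ A ∈ X, ∃ rr cc : Fin r0 → ℕ,
          Function.Injective rr ∧ Function.Injective cc ∧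
          (Matrix.of fun i j : Fin r0 => A (rr i) (cc j)).det ≠ 0 := by
        by_contra hcon
        push_neg at hcon
        by_cases hr00 : r0 = 0
        · haveI : IsEmpty (Fin r0) := by rw [hr00]; infer_instance
          have h := hcon A0 hA0 (fun _ => 0) (fun _ => 0)
            (fun a => isEmptyElim a) (fun a => isEmptyElim a)
          rw [Matrix.det_isEmpty] at h
          exact one_ne_zero h
        · have hcast : r0 - 1 + 1 = r0 := by omega
          have hP' : P (r0 - 1) := by
            intro A hA rr cc hrr hcc
            have e : Fin r0 ≃ Fin (r0 - 1 + 1) := finCongr hcast.symm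
            have h := hcon A hA (fun i => rr (e i)) (fun i => cc (e i))
              (hrr.comp e.injective) (hcc.comp e.injective)
            have hsub : (Matrix.of fun i j : Fin r0 => A (rr (e i)) (cc (e j)))
                = (Matrix.of fun i j : Fin (r0 - 1 + 1) => A (rr i) (cc j)).submatrix e e := by
              ext i j; rfl
            rw [hsub, Matrix.det_submatrix_equiv_self] at h
            exact h
          exact Nat.find_min hPex (by omega) hP'
      obtain ⟨A, hA, rr, cc, hrr, hcc, hdet⟩ := hwitness
      have hE : (Aux.Emat r0 : ℕ → ℕ → k) ∈ X :=
        Aux.Emat_mem hGL hcl' hA r0 ⟨rr, cc, hrr, hcc, hdet⟩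
      have hXeq : X = SymRankLe k r0 := by
        apply Set.eq_of_subset_of_subset hXsub
        intro B hB
        exact Aux.mem_of_rank_le hGL hcl' r0 hE hB.1 (Aux.corner_rank_le hB.2)
      refine ⟨hempty, ?_, ⟨r0, hXeq⟩⟩
      intro hSym
      exact hEm r0 (hXeq ▸ (hSym ▸ hEsymMats (r0 + 1)))

end
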